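/- arXiv:1904.08774 — 3 statements merged into one kernel-verified Lean document; each statement's English description precedes it below -/
import Mathlib

section
/- Let C be a linear [n,k] code over F_{q^m} with parity-check matrix H, and let E ∈ F_{q^m}^{ℓ×n} have F_q-rank t < n−k. Let S = H·Eᵀ, let P be invertible over F_{q^m} with P·S in row echelon form, and let H_sub consist of the rows of P·H corresponding to zero rows of P·S. Then the F_{q^m}-row space of H_sub equals (ker_{F_{q^m}} E) ∩ C^⊥, where ker_{F_{q^m}} E = {v ∈ F_{q^m}^n : E·vᵀ = 0} and C^⊥ is the dual code (the F_{q^m}-row space of H). -/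
open Matrix

noncomputable def extM {K L : Type} [Field K] [Field L] [Algebra K L]
    {m n : ℕ} {ι : Type} (γ : Module.Basis (Fin m) K L) (E : Matrix ι (Fin n) L) :
    Matrix (ι × Fin m) (Fin n) K :=
  Matrix.of fun p j => γ.repr (E p.1 j) p.2

/-- `M` is in row echelon form: for any nonzero entry of a lower row, every higher row has a
nonzero entry strictly to the left (so pivots move strictly right, zero rows are at the
bottom). -/
def IsRowEchelon {R : Type} [Zero R] {r c : ℕ} (M : Matrix (Fin r) (Fin c) R) : Prop :=
  ∀ i₁ i₂ : Fin r, i₁ < i₂ → ∀ j₂ : Fin c, M i₂ j₂ ≠ 0 → ∃ j₁ : Fin c, j₁ < j₂ ∧ M i₁ j₁ ≠ 0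

/-- `vecMul` as a sum of scaled rows. -/
lemma vecMul_eq_sum' {R : Type} [CommRing R] {r c : ℕ} (v : Fin r → R)
    (M : Matrix (Fin r) (Fin c) R) : Matrix.vecMul v M = ∑ i, v i • M i := by
  funext j
  simp [Matrix.vecMul, dotProduct, Finset.sum_apply]

/-- In a row-echelon matrix, if a left combination of the rows vanishes, then the coefficient
of every nonzero row vanishes. -/
lemma echelon_vecMul_zero {R : Type} [Field R] {r c : ℕ} {M : Matrix (Fin r) (Fin c) R}
    (h : _root_.IsRowEchelon M) {v : Fin r → R} (hv : Matrix.vecMul v M = 0) :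
    ∀ i, M i ≠ 0 → v i = 0 := by
  classical
  by_contra hcon
  push_neg at hcon
  obtain ⟨i₀, hMi₀, hvi₀⟩ := hcon
  -- take the minimal bad row
  have hBne : (Finset.univ.filter (fun i => M i ≠ 0 ∧ v i ≠ 0)).Nonempty :=
    ⟨i₀, by simp [hMi₀, hvi₀]⟩
  set i := (Finset.univ.filter (fun i => M i ≠ 0 ∧ v i ≠ 0)).min' hBne with hidef
  have hi : M i ≠ 0 ∧ v i ≠ 0 := by
    have := Finset.min'_mem _ hBne
    simpa using this
  have himin : ∀ i', M i' ≠ 0 → v i' ≠ 0 → i ≤ i' := fun i' h1 h2 =>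
    Finset.min'_le _ _ (by simp [h1, h2])
  -- take the minimal nonzero column of row i
  have hne : (Finset.univ.filter (fun j => M i j ≠ 0)).Nonempty := by
    rcases Function.ne_iff.mp hi.1 with ⟨j, hj⟩
    exact ⟨j, by simpa using hj⟩
  set j := (Finset.univ.filter (fun j => M i j ≠ 0)).min' hne with hjdef
  have hMij : M i j ≠ 0 := by
    have := Finset.min'_mem _ hne
    simpa using this
  have hmin : ∀ j', M i j' ≠ 0 → j ≤ j' := fun j' hj' =>
    Finset.min'_le _ _ (by simp [hj'])
  have h0 : Matrix.vecMul v M j = 0 := by rw [hv]; rfl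
  rw [Matrix.vecMul, dotProduct] at h0
  have hsum : ∑ i', v i' * M i' j = v i * M i j := by
    apply Finset.sum_eq_single
    · intro i' _ hne'
      by_cases hv' : v i' = 0
      · rw [hv', zero_mul]
      by_cases hMij' : M i' j = 0
      · rw [hMij', mul_zero]
      have hMi' : M i' ≠ 0 := fun hz => hMij' (by rw [hz]; rfl)
      have hlt : i < i' := lt_of_le_of_ne (himin i' hMi' hv') (Ne.symm hne')
      rcases h i i' hlt j hMij' with ⟨j₁, hj₁, hMj₁⟩
      exact absurd (hmin j₁ hMj₁) (not_le.mpr hj₁)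
    · intro hni; exact absurd (Finset.mem_univ i) hni
  rw [hsum] at h0
  rcases mul_eq_zero.mp h0 with h' | h'
  · exact hi.2 h'
  · exact hMij h'

/-- if `H` is a (full-rank) parity-check matrix of the `[n,k]` code `C` over
`F_{q^m}`, `E` has `F_q`-rank `t < n-k`, `S = H·Eᵀ`, `P` is invertible with `P·S` in row
echelon form, and `H_sub` consists of the rows of `P·H` corresponding to the zero rows of
`P·S`, then the `F_{q^m}`-row space of `H_sub` equals `ker_{F_{q^m}}(E) ∩ C^⊥`, where `C^⊥`
is the row space of `H`. -/
theorem span_Hsub_eq_ker_inter_dual {q m n k ℓ t : ℕ} (K L : Type) [Field K] [Fintype K]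
    [Field L] [Fintype L] [Algebra K L] (hK : Fintype.card K = q) (hL : Fintype.card L = q ^ m)
    (γ : Module.Basis (Fin m) K L)
    (H : Matrix (Fin (n - k)) (Fin n) L) (C : Submodule L (Fin n → L))
    (hC : ∀ v, v ∈ C ↔ H.mulVec v = 0) (hH : H.rank = n - k)
    (E : Matrix (Fin ℓ) (Fin n) L) (hE : (extM γ E).rank = t) (ht : t < n - k)
    (P : Matrix (Fin (n - k)) (Fin (n - k)) L) (hP : IsUnit P)
    (hech : _root_.IsRowEchelon (P * (H * Eᵀ))) :
    Submodule.span L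
        (Set.range (fun i : {i : Fin (n - k) // (P * (H * Eᵀ)) i = 0} => (P * H) i.1)) =
      LinearMap.ker E.mulVecLin ⊓ Submodule.span L (Set.range H) := by
  -- row i of P*H, hit by E, gives row i of P*(H*Eᵀ)
  have key : ∀ i : Fin (n - k), E.mulVec ((P * H) i) = (P * (H * Eᵀ)) i := by
    intro i; funext a
    rw [← Matrix.mul_assoc]
    simp only [Matrix.mulVec, Matrix.mul_apply, dotProduct, Matrix.transpose_apply]
    exact Finset.sum_congr rfl fun x _ => mul_comm _ _
  have row_eq : ∀ i : Fin (n - k), (P * H) i = Matrix.vecMul (P i) H := by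
    intro i; funext j
    simp [Matrix.mul_apply, Matrix.vecMul, dotProduct]
  apply le_antisymm
  · rw [Submodule.span_le]
    rintro _ ⟨i, rfl⟩
    refine ⟨?_, ?_⟩
    · show (P * H) i.1 ∈ LinearMap.ker E.mulVecLin
      rw [LinearMap.mem_ker, Matrix.mulVecLin_apply, key i.1, i.2]
    · show (P * H) i.1 ∈ Submodule.span L (Set.range H)
      rw [row_eq, vecMul_eq_sum' _ _]
      exact Submodule.sum_mem _ fun k _ =>
        Submodule.smul_mem _ _ (Submodule.subset_span ⟨k, rfl⟩)
  · rintro v ⟨hker, hspan⟩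
    rw [SetLike.mem_coe] at hspan
    replace hspan := (Submodule.mem_span_range_iff_exists_fun L).mp hspan
    obtain ⟨c, hc⟩ := hspan
    have hdet : IsUnit P.det := (Matrix.isUnit_iff_isUnit_det P).mp hP
    set d : Fin (n - k) → L := Matrix.vecMul c P⁻¹ with hd
    have hdPH : Matrix.vecMul d (P * H) = v := by
      rw [hd, Matrix.vecMul_vecMul, ← Matrix.mul_assoc, Matrix.nonsing_inv_mul P hdet,
        Matrix.one_mul, vecMul_eq_sum' _ _]
      exact hc
    have hEv : E.mulVec v = 0 := by
      simpa using hker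
    have hvm : Matrix.vecMul d (P * (H * Eᵀ)) = 0 := by
      rw [← Matrix.mul_assoc, ← Matrix.vecMul_vecMul, hdPH, Matrix.vecMul_transpose, hEv]
    have hzero : ∀ i, (P * (H * Eᵀ)) i ≠ 0 → d i = 0 :=
      echelon_vecMul_zero hech hvm
    have hv' : v = ∑ i, d i • (P * H) i := by
      rw [← hdPH, vecMul_eq_sum' _ _]
    rw [hv']
    apply Submodule.sum_mem
    intro i _
    by_cases hi : (P * (H * Eᵀ)) i = 0
    · exact Submodule.smul_mem _ _ (Submodule.subset_span ⟨⟨i, hi⟩, rfl⟩)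
    · rw [hzero i hi, zero_smul]
      exact Submodule.zero_mem _
end

section
/- Let C be an F_{q^m}-linear [n,k] rank-metric code with minimum rank distance d, and let C' ⊆ F_{q^{mℓ}}^n be obtained by identifying ℓ-tuples of codewords of C (stacked as an ℓ×n matrix over F_{q^m}) with vectors over F_{q^{mℓ}} via a fixed F_{q^m}-basis of F_{q^{mℓ}}. Then C' is an F_{q^{mℓ}}-linear code of length n, dimension k over F_{q^{mℓ}}, and minimum rank distance d (with rank taken over F_q). -/
open Matrix Module Submodule

section Aux

variable {n ℓ : ℕ} {K L M : Type} [Field K] [Field L] [Field M]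
  [Algebra K L] [Algebra L M] [Algebra K M] [IsScalarTower K L M]
  (β : Basis (Fin ℓ) L M)

/-- The `i`-th row map. -/
noncomputable def rowL (i : Fin ℓ) : (Fin n → M) →ₗ[L] (Fin n → L) :=
  LinearMap.pi fun j =>
    (Finsupp.lapply i) ∘ₗ (β.repr : M ≃ₗ[L] (Fin ℓ →₀ L)).toLinearMap ∘ₗ LinearMap.proj j

@[simp] lemma rowL_apply (i : Fin ℓ) (v : Fin n → M) (j : Fin n) :
    rowL β i v j = β.repr (v j) i := rfl

lemma rowL_smul (c : M) (v : Fin n → M) (i : Fin ℓ) :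
    rowL β i (c • v) = ∑ i' : Fin ℓ, (β.repr (c * β i') i) • rowL β i' v := by
  funext j
  have hv : (c • v) j = ∑ i' : Fin ℓ, β.repr (v j) i' • (c * β i') := by
    calc (c • v) j = c * ∑ i' : Fin ℓ, β.repr (v j) i' • β i' := by rw [β.sum_repr (v j)]; rfl
    _ = ∑ i' : Fin ℓ, β.repr (v j) i' • (c * β i') := by
        rw [Finset.mul_sum]; exact Finset.sum_congr rfl fun i' _ => mul_smul_comm _ _ _
  simp only [rowL_apply, hv, map_sum, _root_.map_smul, Finsupp.coe_smul, Finsupp.coe_finset_sum,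
    Finset.sum_apply, Pi.smul_apply, smul_eq_mul, Finsupp.smul_apply]
  exact Finset.sum_congr rfl fun i' _ => mul_comm _ _

variable (C : Submodule L (Fin n → L))

/-- The interleaved code. -/
noncomputable def interC : Submodule M (Fin n → M) where
  carrier := {v | ∀ i, rowL β i v ∈ C}
  add_mem' {v w} hv hw i := by rw [map_add]; exact C.add_mem (hv i) (hw i)
  zero_mem' i := by rw [map_zero]; exact C.zero_mem
  smul_mem' c v hv i := by
    rw [rowL_smul]
    exact Submodule.sum_mem C fun i' _ => C.smul_mem _ (hv i')

lemma mem_interC (v : Fin n → M) : v ∈ interC β C ↔ ∀ i, rowL β i v ∈ C := Iff.rfl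

/-- Interleaved code is `L`-isomorphic to `ℓ` copies of `C`. -/
noncomputable def interEquiv : ((interC β C).restrictScalars L) ≃ₗ[L] (Fin ℓ → ↥C) where
  toFun v i := ⟨rowL β i v.1, v.2 i⟩
  map_add' v w := by ext i j; simp
  map_smul' c v := by ext i j; simp
  invFun r := ⟨fun j => ∑ i, ((r i : Fin n → L) j) • β i, by
    intro i
    have : rowL β i (fun j => ∑ i', ((r i' : Fin n → L) j) • β i') = (r i : Fin n → L) := by
      funext j
      simp [Finsupp.single_apply]
    exact this ▸ (r i).2⟩
  left_inv v := by
    apply Subtype.ext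
    funext j
    exact β.sum_repr (v.1 j)
  right_inv r := by
    funext i
    apply Subtype.ext
    funext j
    simp [Finsupp.single_apply]

end Aux

/-- let `C` be an `F_{q^m}`-linear `[n,k]` rank-metric code with minimum rank
distance `d` (rank weight of `v` = `dim_{F_q}` of the `F_q`-span of the entries of `v`).
Identifying `ℓ`-tuples of codewords of `C` with vectors over the degree-`ℓ` extension
`F_{q^{mℓ}}` via a fixed basis `β` of `F_{q^{mℓ}}/F_{q^m}`, one obtains an
`F_{q^{mℓ}}`-linear code `C'` of length `n`, dimension `k`, and minimum rank distance `d`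
(rank again taken over `F_q`). -/
theorem interleaved_as_linear_code {q m n k d ℓ : ℕ}
    (K L M : Type) [Field K] [Fintype K] [Field L] [Fintype L] [Field M] [Fintype M]
    [Algebra K L] [Algebra L M] [Algebra K M] [IsScalarTower K L M]
    (hK : Fintype.card K = q) (hL : Fintype.card L = q ^ m) (hM : Fintype.card M = q ^ (m * ℓ))
    (β : Basis (Fin ℓ) L M)
    (C : Submodule L (Fin n → L)) (hk : finrank L C = k)
    (hd : ∀ v ∈ C, v ≠ 0 → d ≤ finrank K (span K (Set.range v)))
    (hd' : ∃ v ∈ C, v ≠ 0 ∧ finrank K (span K (Set.range v)) = d) :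
    ∃ C' : Submodule M (Fin n → M),
      (∀ v : Fin n → M, v ∈ C' ↔ ∀ i : Fin ℓ, (fun j => β.repr (v j) i) ∈ C) ∧
      finrank M C' = k ∧
      (∀ v ∈ C', v ≠ 0 → d ≤ finrank K (span K (Set.range v))) ∧
      (∃ v ∈ C', v ≠ 0 ∧ finrank K (span K (Set.range v)) = d) := by
  refine ⟨interC β C, fun v => Iff.rfl, ?_, ?_, ?_⟩
  · -- dimension
    have hℓ : finrank L M = ℓ := by
      rw [finrank_eq_card_basis β, Fintype.card_fin]
    have hℓpos : 0 < ℓ := by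
      rw [← hℓ]; exact finrank_pos
    have h1 : finrank L ((interC β C).restrictScalars L) = ℓ * k := by
      rw [(interEquiv β C).finrank_eq, Module.finrank_pi_fintype, hk]
      simp [Finset.sum_const, mul_comm]
    have h2 : finrank M ((interC β C).restrictScalars L) = finrank M ↥(interC β C) :=
      (Submodule.restrictScalarsEquiv L M _ (interC β C)).finrank_eq
    have h3 : finrank L M * finrank M ((interC β C).restrictScalars L)
        = finrank L ((interC β C).restrictScalars L) :=
      Module.finrank_mul_finrank L M _
    rw [hℓ, h2, h1] at h3
    have : ℓ * finrank M ↥(interC β C) = ℓ * k := h3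
    exact Nat.eq_of_mul_eq_mul_left hℓpos this
  · -- lower bound
    intro v hv hv0
    obtain ⟨j, hj⟩ : ∃ j, v j ≠ 0 := by
      by_contra h
      push_neg at h
      exact hv0 (funext h)
    have hrepr : β.repr (v j) ≠ 0 := fun h => hj (by simpa using congrArg β.repr.symm h)
    obtain ⟨i, hi⟩ : ∃ i, β.repr (v j) i ≠ 0 := by
      by_contra h
      push_neg at h
      exact hrepr (Finsupp.ext h)
    have hrow0 : rowL β i v ≠ 0 := fun h => hi (by simpa using congrFun h j)
    have hle := hd (rowL β i v) (hv i) hrow0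
    refine hle.trans ?_
    -- rowL β i v = φ ∘ v for a K-linear map φ
    set φ : M →ₗ[K] L :=
      (Finsupp.lapply i) ∘ₗ ((β.repr.restrictScalars K : M ≃ₗ[K] (Fin ℓ →₀ L)) :
        M →ₗ[K] (Fin ℓ →₀ L)) with hφ
    have hcomp : Set.range (rowL β i v) = φ '' Set.range v := by
      rw [← Set.range_comp]; rfl
    rw [hcomp, ← Submodule.map_span]
    exact Submodule.finrank_map_le φ _
  · -- achieving d
    obtain ⟨v, hvC, hv0, hvd⟩ := hd'
    set g : L →ₗ[K] M := (Algebra.linearMap L M).restrictScalars K with hg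
    have hginj : Function.Injective g := fun a b h => by
      exact (algebraMap L M).injective h
    refine ⟨fun j => algebraMap L M (v j), ?_, ?_, ?_⟩
    · intro i
      have : rowL β i (fun j => algebraMap L M (v j)) = (β.repr 1 i) • v := by
        funext j
        simp only [rowL_apply, Pi.smul_apply, smul_eq_mul, Algebra.algebraMap_eq_smul_one,
          _root_.map_smul, Finsupp.smul_apply]
        exact mul_comm _ _
      rw [this]
      exact C.smul_mem _ hvC
    · intro h
      apply hv0
      funext j
      have := congrFun h j
      simpa using (algebraMap L M).injective (by simpa using this)
    · have hcomp : Set.range (fun j => algebraMap L M (v j)) = g '' Set.range v := by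
        rw [← Set.range_comp]; rfl
      rw [hcomp, ← Submodule.map_span, ← hvd]
      exact ((Submodule.equivMapOfInjective g hginj _).finrank_eq).symm
end

section
/- Let C be a linear [n,k,d] rank-metric code over F_{q^m} with parity-check matrix H, and let E ∈ F_{q^m}^{ℓ×n} have rank support with basis matrix B ∈ F_q^{t×n} and satisfy rank_{F_{q^m}}(E) = t. Suppose that for every b ∈ F_q^n not in the F_q-row space of B, the matrix H·[Bᵀ | bᵀ] has F_{q^m}-rank t+1. Then the F_q-row space of the expanded matrix ext_γ(H_sub) equals ker_{F_q}(B), where H_sub is defined from S = H·Eᵀ as the rows of P·H corresponding to zero rows of a row-echelon form P·S. (This generalizes the t ≤ d−2 condition.) -/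
open Matrix

lemma sum_smul_repr_eq_zero_iff {K L : Type} [Field K] [Field L] [Algebra K L] {m : ℕ}
    (γ : Module.Basis (Fin m) K L) {ι : Type} [Fintype ι] (a : ι → K) (v : ι → L) :
    (∑ i, a i • v i) = 0 ↔ ∀ s : Fin m, (∑ i, a i * γ.repr (v i) s) = 0 := by
  rw [← (LinearEquiv.map_eq_zero_iff γ.repr), map_sum]
  simp_rw [_root_.map_smul]
  rw [Finsupp.ext_iff]
  refine forall_congr' fun s => ?_
  rw [Finsupp.finset_sum_apply]
  simp [Finsupp.smul_apply]

lemma dot_alg_iff {K L : Type} [Field K] [Field L] [Algebra K L] {m n : ℕ}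
    (γ : Module.Basis (Fin m) K L) (v : Fin n → L) (c : Fin n → K) :
    (∑ j, v j * algebraMap K L (c j)) = 0 ↔
      ∀ s : Fin m, (∑ j, γ.repr (v j) s * c j) = 0 := by
  have h1 : (∑ j, v j * algebraMap K L (c j)) = ∑ j, c j • v j := by
    refine Finset.sum_congr rfl fun j _ => ?_
    rw [Algebra.smul_def, mul_comm]
  rw [h1, sum_smul_repr_eq_zero_iff γ]
  refine forall_congr' fun s => ?_
  rw [show (∑ j, c j * γ.repr (v j) s) = ∑ j, γ.repr (v j) s * c j from
    Finset.sum_congr rfl fun j _ => mul_comm _ _]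

lemma echelon_linearIndependent {F : Type} [Field F] {r c : ℕ}
    {M : Matrix (Fin r) (Fin c) F} (h : _root_.IsRowEchelon M) :
    LinearIndependent F (fun i : {i : Fin r // M i ≠ 0} => M i.1) := by
  classical
  rw [Fintype.linearIndependent_iff]
  intro g hg
  by_contra hc
  push_neg at hc
  obtain ⟨i1, hi1⟩ := hc
  have hTne : (Finset.univ.filter fun i : {i : Fin r // M i ≠ 0} => g i ≠ 0).Nonempty :=
    ⟨i1, by simp [hi1]⟩
  obtain ⟨i0, hi0mem, hi0min⟩ := Finset.exists_min_image _ (fun i => i.1) hTne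
  have hgi0 : g i0 ≠ 0 := by simpa using (Finset.mem_filter.mp hi0mem).2
  have hJne : (Finset.univ.filter fun j : Fin c => M i0.1 j ≠ 0).Nonempty := by
    obtain ⟨j, hj⟩ := Function.ne_iff.mp i0.2
    exact ⟨j, by simpa using hj⟩
  set J := Finset.univ.filter fun j : Fin c => M i0.1 j ≠ 0 with hJ
  set j0 := J.min' hJne with hj0
  have hMi0j0 : M i0.1 j0 ≠ 0 := by
    have := J.min'_mem hJne
    simpa [hJ] using this
  have hsum : ∑ i : {i : Fin r // M i ≠ 0}, g i * M i.1 j0 = 0 := by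
    have := congrFun hg j0
    simpa using this
  have hz : ∀ i : {i : Fin r // M i ≠ 0}, i ≠ i0 → g i * M i.1 j0 = 0 := by
    intro i hne
    by_cases hgi : g i = 0
    · simp [hgi]
    have hmem : i ∈ Finset.univ.filter fun i : {i : Fin r // M i ≠ 0} => g i ≠ 0 := by
      simp [hgi]
    have hle : i0.1 ≤ i.1 := hi0min i hmem
    have hlt : i0.1 < i.1 :=
      lt_of_le_of_ne hle (fun hval => hne ((Subtype.ext hval).symm))
    by_cases hMij : M i.1 j0 = 0
    · simp [hMij]
    obtain ⟨j1, hj1lt, hj1ne⟩ := h i0.1 i.1 hlt j0 hMij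
    have : j0 ≤ j1 := J.min'_le j1 (by simp [hJ, hj1ne])
    exact absurd hj1lt (not_lt.mpr this)
  have hone := Finset.sum_eq_single i0 (fun i _ hne => hz i hne)
    (fun hmem => absurd (Finset.mem_univ i0) hmem)
  rw [hone] at hsum
  rcases mul_eq_zero.mp hsum with h1 | h2
  · exact hgi0 h1
  · exact hMi0j0 h2

/-- beyond `d-2`: let `H` be a full-rank parity-check matrix of a linear
`[n,k]` rank-metric code over `F_{q^m}`, `E ∈ F_{q^m}^{ℓ×n}` with rank support basis matrix
`B ∈ F_q^{t×n}` and `rank_{F_{q^m}}(E) = t`. If for every `b ∈ F_q^n` outside the `F_q`-row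
space of `B` the matrix `H·[Bᵀ | bᵀ]` has `F_{q^m}`-rank `t+1`, then the `F_q`-row space of
`ext_γ(H_sub)` equals `ker_{F_q}(B)`, where `H_sub` consists of the rows of `P·H`
corresponding to the zero rows of the row echelon form `P·S` of `S = H·Eᵀ`. -/
theorem support_recovery_beyond {q m n k ℓ t : ℕ} (K L : Type) [Field K] [Fintype K]
    [Field L] [Fintype L] [Algebra K L] (hK : Fintype.card K = q) (hL : Fintype.card L = q ^ m)
    (γ : Module.Basis (Fin m) K L)
    (H : Matrix (Fin (n - k)) (Fin n) L) (hH : H.rank = n - k)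
    (E : Matrix (Fin ℓ) (Fin n) L)
    (B : Matrix (Fin t) (Fin n) K) (hBrk : B.rank = t)
    (hBsupp : Submodule.span K (Set.range B) = Submodule.span K (Set.range (extM γ E)))
    (hEqm : E.rank = t)
    (hcond : ∀ b : Fin n → K, b ∉ Submodule.span K (Set.range B) →
      (H * (Matrix.of fun (j : Fin n) (s : Fin t ⊕ Unit) =>
        Sum.elim (fun s' => algebraMap K L (B s' j)) (fun _ => algebraMap K L (b j)) s)).rank
        = t + 1)
    (P : Matrix (Fin (n - k)) (Fin (n - k)) L) (hP : IsUnit P)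
    (hech : _root_.IsRowEchelon (P * (H * Eᵀ))) :
    Submodule.span K
        (Set.range (extM γ (Matrix.of fun (i : {i : Fin (n - k) // (P * (H * Eᵀ)) i = 0}) j =>
          (P * H) i.1 j))) = LinearMap.ker B.mulVecLin := by
  classical
  set BL : Matrix (Fin t) (Fin n) L := B.map (algebraMap K L) with hBLdef
  -- B has linearly independent rows
  have hBrow : Module.finrank K (Submodule.span K (Set.range B)) = t := by
    exact (Matrix.rank_eq_finrank_span_row B).symm.trans hBrk
  have hBli : LinearIndependent K B := by
    apply linearIndependent_iff_card_eq_finrank_span.mpr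
    rw [Set.finrank, hBrow, Fintype.card_fin]
  -- BL has linearly independent rows over L
  have hBLli : LinearIndependent L BL := by
    refine Fintype.linearIndependent_iff.mpr ?_
    intro g hg
    have hcomp : ∀ j : Fin n, ∑ r, B r j • g r = 0 := by
      intro j
      have h1 : ∑ r, g r * algebraMap K L (B r j) = 0 := by
        have := congrFun hg j
        simpa [hBLdef, Matrix.map_apply] using this
      calc ∑ r, B r j • g r = ∑ r, g r * algebraMap K L (B r j) :=
            Finset.sum_congr rfl fun r _ => by rw [Algebra.smul_def, mul_comm]
        _ = 0 := h1
    intro r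
    have hKs : ∀ s : Fin m, ∀ j, ∑ r', B r' j * γ.repr (g r') s = 0 := fun s j =>
      (sum_smul_repr_eq_zero_iff γ (fun r' => B r' j) g).mp (hcomp j) s
    have hzero : ∀ s : Fin m, ∀ r', γ.repr (g r') s = 0 := by
      intro s
      apply Fintype.linearIndependent_iff.mp hBli (fun r' => γ.repr (g r') s)
      funext j
      have := hKs s j
      simpa [Finset.sum_apply, mul_comm] using this
    have : γ.repr (g r) = 0 := Finsupp.ext fun s => hzero s r
    exact (LinearEquiv.map_eq_zero_iff γ.repr).mp this
  -- algebraMap image of the K-span of B lands in the L-span of BL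
  have halg_mem : ∀ x : Fin n → K, x ∈ Submodule.span K (Set.range B) →
      (fun j => algebraMap K L (x j)) ∈ Submodule.span L (Set.range BL) := by
    intro x hx
    induction hx using Submodule.span_induction with
    | mem y hy =>
        obtain ⟨r, rfl⟩ := hy
        exact Submodule.subset_span ⟨r, rfl⟩
    | zero =>
        have he : (fun j => algebraMap K L ((0 : Fin n → K) j)) = (0 : Fin n → L) := by
          funext j; simp
        rw [he]; exact Submodule.zero_mem _
    | add y z _ _ ihy ihz =>
        have he : (fun j => algebraMap K L ((y + z) j)) =
            (fun j => algebraMap K L (y j)) + fun j => algebraMap K L (z j) := by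
          funext j; simp
        rw [he]; exact Submodule.add_mem _ ihy ihz
    | smul a y _ ihy =>
        have he : (fun j => algebraMap K L ((a • y) j)) =
            algebraMap K L a • fun j => algebraMap K L (y j) := by
          funext j; simp [Algebra.smul_def]
        rw [he]; exact Submodule.smul_mem _ _ ihy
  -- row-space equality over L
  have hEBL : Submodule.span L (Set.range E) = Submodule.span L (Set.range BL) := by
    have hle : Submodule.span L (Set.range E) ≤ Submodule.span L (Set.range BL) := by
      rw [Submodule.span_le]
      rintro x ⟨r, rfl⟩
      have hdecomp : E r = ∑ s : Fin m,
          γ s • (fun j => algebraMap K L (extM γ E (r, s) j)) := by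
        funext j
        rw [Finset.sum_apply]
        have hrepr := γ.sum_repr (E r j)
        rw [← hrepr]
        refine Finset.sum_congr rfl fun s _ => ?_
        rw [Pi.smul_apply, smul_eq_mul, Algebra.smul_def, mul_comm]
        rfl
      rw [SetLike.mem_coe, hdecomp]
      refine Submodule.sum_mem _ fun s _ => Submodule.smul_mem _ _ ?_
      apply halg_mem
      rw [hBsupp]
      exact Submodule.subset_span ⟨(r, s), rfl⟩
    have h1 : Module.finrank L (Submodule.span L (Set.range E)) = t := by
      exact (Matrix.rank_eq_finrank_span_row E).symm.trans hEqm
    have h2 : Module.finrank L (Submodule.span L (Set.range BL)) = t := by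
      rw [finrank_span_eq_card hBLli, Fintype.card_fin]
    exact Submodule.eq_of_le_of_finrank_le hle (by rw [h1, h2])
  -- orthogonality transfers between E and BL
  have hperp : ∀ v : Fin n → L, (∀ r, v ⬝ᵥ E r = 0) ↔ (∀ r', v ⬝ᵥ BL r' = 0) := by
    intro v
    let f : (Fin n → L) →ₗ[L] L :=
      { toFun := fun x => v ⬝ᵥ x
        map_add' := fun x y => dotProduct_add v x y
        map_smul' := fun a x => by simp [dotProduct_smul] }
    have hker : ∀ (S : Set (Fin n → L)), (∀ x ∈ S, v ⬝ᵥ x = 0) →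
        Submodule.span L S ≤ LinearMap.ker f := by
      intro S hS
      rw [Submodule.span_le]
      intro x hx
      exact LinearMap.mem_ker.mpr (hS x hx)
    constructor
    · intro hE r'
      have hmem : BL r' ∈ Submodule.span L (Set.range E) := by
        rw [hEBL]; exact Submodule.subset_span ⟨r', rfl⟩
      have := hker (Set.range E) (by rintro x ⟨r, rfl⟩; exact hE r) hmem
      exact LinearMap.mem_ker.mp this
    · intro hBLr r
      have hmem : E r ∈ Submodule.span L (Set.range BL) := by
        rw [← hEBL]; exact Submodule.subset_span ⟨r, rfl⟩
      have := hker (Set.range BL) (by rintro x ⟨r', rfl⟩; exact hBLr r') hmem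
      exact LinearMap.mem_ker.mp this
  -- characterization of zero rows
  have hZiff : ∀ i : Fin (n - k), (P * (H * Eᵀ)) i = 0 ↔
      ∀ r', (P * H) i ⬝ᵥ BL r' = 0 := by
    intro i
    have h1 : (P * (H * Eᵀ)) i = 0 ↔ ∀ r, (P * H) i ⬝ᵥ E r = 0 := by
      rw [← Matrix.mul_assoc]
      constructor
      · intro h0 r
        have := congrFun h0 r
        simpa [Matrix.mul_apply, dotProduct] using this
      · intro hall
        funext r
        simpa [Matrix.mul_apply, dotProduct] using hall r
    rw [h1]
    exact hperp _
  -- the inclusion span(ext H_sub) ≤ ker B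
  have hdotrow : ∀ (i : Fin (n - k)), (P * (H * Eᵀ)) i = 0 →
      ∀ (r : Fin t) (s : Fin m), ∑ j, γ.repr ((P * H) i j) s * B r j = 0 := by
    intro i hi r s
    have hd : (∑ j, (P * H) i j * algebraMap K L (B r j)) = 0 := by
      have := (hZiff i).mp hi r
      simpa [dotProduct, hBLdef, Matrix.map_apply] using this
    exact (dot_alg_iff γ ((P * H) i) (B r)).mp hd s
  have hsub : Submodule.span K
      (Set.range (extM γ (Matrix.of fun (i : {i : Fin (n - k) // (P * (H * Eᵀ)) i = 0}) j =>
        (P * H) i.1 j))) ≤ LinearMap.ker B.mulVecLin := by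
    rw [Submodule.span_le]
    rintro x ⟨⟨i, s⟩, rfl⟩
    rw [SetLike.mem_coe, LinearMap.mem_ker]
    funext r
    have := hdotrow i.1 i.2 r s
    simpa [Matrix.mulVecLin_apply, Matrix.mulVec, dotProduct, extM, mul_comm] using this
  refine le_antisymm hsub ?_
  by_contra hnot
  set MW := extM γ (Matrix.of fun (i : {i : Fin (n - k) // (P * (H * Eᵀ)) i = 0}) j =>
    (P * H) i.1 j) with hMWdef
  have hlt : Submodule.span K (Set.range MW) < LinearMap.ker B.mulVecLin :=
    lt_of_le_of_ne hsub (fun he => hnot (le_of_eq he.symm))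
  have hrn1 : MW.rank + Module.finrank K (LinearMap.ker MW.mulVecLin) = n := by
    have := LinearMap.finrank_range_add_finrank_ker MW.mulVecLin
    rwa [Module.finrank_pi, Fintype.card_fin] at this
  have hrn2 : t + Module.finrank K (LinearMap.ker B.mulVecLin) = n := by
    have := LinearMap.finrank_range_add_finrank_ker B.mulVecLin
    rw [Module.finrank_pi, Fintype.card_fin] at this
    rwa [show Module.finrank K (LinearMap.range B.mulVecLin) = t from hBrk] at this
  have hMWrank : MW.rank = Module.finrank K (Submodule.span K (Set.range MW)) :=
    Matrix.rank_eq_finrank_span_row MW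
  have hltdim : Module.finrank K (Submodule.span K (Set.range MW)) <
      Module.finrank K (LinearMap.ker B.mulVecLin) :=
    Submodule.finrank_lt_finrank_of_lt hlt
  have hBinker : Submodule.span K (Set.range B) ≤ LinearMap.ker MW.mulVecLin := by
    rw [Submodule.span_le]
    rintro x ⟨r, rfl⟩
    rw [SetLike.mem_coe, LinearMap.mem_ker]
    funext p
    obtain ⟨i, s⟩ := p
    have := hdotrow i.1 i.2 r s
    simpa [hMWdef, Matrix.mulVecLin_apply, Matrix.mulVec, dotProduct, extM] using this
  obtain ⟨b, hbker, hbnot⟩ : ∃ b, b ∈ LinearMap.ker MW.mulVecLin ∧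
      b ∉ Submodule.span K (Set.range B) := by
    by_contra hno
    push_neg at hno
    have hle2 : LinearMap.ker MW.mulVecLin ≤ Submodule.span K (Set.range B) :=
      fun x hx => hno x hx
    have hfr := Submodule.finrank_mono hle2
    rw [hBrow] at hfr
    omega
  have hbdot : ∀ (i : Fin (n - k)), (P * (H * Eᵀ)) i = 0 →
      ∑ j, (P * H) i j * algebraMap K L (b j) = 0 := by
    intro i hi
    apply (dot_alg_iff γ ((P * H) i) b).mpr
    intro s
    have h0 : MW.mulVec b (⟨i, hi⟩, s) = 0 := by
      have := LinearMap.mem_ker.mp hbker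
      exact congrFun this (⟨i, hi⟩, s)
    simpa [Matrix.mulVec, dotProduct, hMWdef, extM] using h0
  have hrkG := hcond b hbnot
  set G : Matrix (Fin n) (Fin t ⊕ Unit) L := Matrix.of fun (j : Fin n) (s : Fin t ⊕ Unit) =>
    Sum.elim (fun s' => algebraMap K L (B s' j)) (fun _ => algebraMap K L (b j)) s with hGdef
  -- rank of H * BLᵀ equals t
  have hcolG : ∀ r : Fin t, (H * G)ᵀ (Sum.inl r) = (H * BLᵀ)ᵀ r := by
    intro r
    funext i
    simp [Matrix.transpose_apply, Matrix.mul_apply, hGdef, hBLdef, Matrix.map_apply]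
  have hrkHG_le : (H * G).rank ≤ (H * BLᵀ).rank + 1 := by
    rw [Matrix.rank_eq_finrank_span_cols, Matrix.rank_eq_finrank_span_cols, Matrix.col, Matrix.col]
    have hsub2 : Submodule.span L (Set.range (H * G)ᵀ) ≤
        Submodule.span L (Set.range (H * BLᵀ)ᵀ) ⊔
          Submodule.span L {(H * G)ᵀ (Sum.inr ())} := by
      rw [Submodule.span_le]
      rintro x ⟨sx, rfl⟩
      cases sx with
      | inl r =>
          apply Submodule.mem_sup_left
          rw [hcolG r]
          exact Submodule.subset_span ⟨r, rfl⟩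
      | inr u =>
          apply Submodule.mem_sup_right
          apply Submodule.subset_span
          cases u
          exact Set.mem_singleton _
    have hsup := Submodule.finrank_sup_add_finrank_inf_eq
      (Submodule.span L (Set.range (H * BLᵀ)ᵀ)) (Submodule.span L {(H * G)ᵀ (Sum.inr ())})
    have hsingle : Module.finrank L (Submodule.span L {(H * G)ᵀ (Sum.inr ())}) ≤ 1 := by
      by_cases hx : (H * G)ᵀ (Sum.inr ()) = 0
      · rw [hx, show Submodule.span L ({0} : Set (Fin (n - k) → L)) = ⊥ from
          Submodule.span_zero_singleton L, finrank_bot]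
        omega
      · rw [show Submodule.span L {(H * G)ᵀ (Sum.inr ())} = L ∙ (H * G)ᵀ (Sum.inr ()) from rfl,
          finrank_span_singleton hx]
    have hmono := Submodule.finrank_mono hsub2
    omega
  have hrkHB : (H * BLᵀ).rank = t := by
    have hle : (H * BLᵀ).rank ≤ t := by
      have := Matrix.rank_le_card_width (H * BLᵀ)
      simpa using this
    omega
  have hPdet : IsUnit P.det := (Matrix.isUnit_iff_isUnit_det P).mp hP
  -- rank of the echelon form is t
  have hrkPS : (P * (H * Eᵀ)).rank = t := by
    have e1 : P * (H * Eᵀ) = (P * H) * Eᵀ := by rw [Matrix.mul_assoc]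
    have e2 : ∀ W : Matrix (Fin (n - k)) (Fin n) L, (W * Eᵀ).rank = (W * BLᵀ).rank := by
      intro W
      have r1 : LinearMap.range (W * Eᵀ).mulVecLin =
          Submodule.map W.mulVecLin (Submodule.span L (Set.range E)) := by
        rw [Matrix.mulVecLin_mul, LinearMap.range_comp, Matrix.range_mulVecLin,
          Matrix.col_transpose, Matrix.row]
      have r2 : LinearMap.range (W * BLᵀ).mulVecLin =
          Submodule.map W.mulVecLin (Submodule.span L (Set.range BL)) := by
        rw [Matrix.mulVecLin_mul, LinearMap.range_comp, Matrix.range_mulVecLin,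
          Matrix.col_transpose, Matrix.row]
      rw [Matrix.rank, Matrix.rank, r1, r2, hEBL]
    have e3 : ((P * H) * BLᵀ).rank = (H * BLᵀ).rank := by
      rw [Matrix.mul_assoc]
      exact Matrix.rank_mul_eq_right_of_isUnit_det P (H * BLᵀ) hPdet
    rw [e1, e2 (P * H), e3, hrkHB]
  -- the number of nonzero rows of the echelon form is t
  have hliPS := echelon_linearIndependent hech
  have hspanPS : Submodule.span L (Set.range (P * (H * Eᵀ))) =
      Submodule.span L (Set.range fun i : {i : Fin (n - k) // (P * (H * Eᵀ)) i ≠ 0} =>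
        (P * (H * Eᵀ)) i.1) := by
    apply le_antisymm
    · rw [Submodule.span_le]
      rintro x ⟨i, rfl⟩
      by_cases h0 : (P * (H * Eᵀ)) i = 0
      · rw [SetLike.mem_coe, h0]
        exact Submodule.zero_mem _
      · exact Submodule.subset_span ⟨⟨i, h0⟩, rfl⟩
    · rw [Submodule.span_le]
      rintro x ⟨i, rfl⟩
      exact Submodule.subset_span ⟨i.1, rfl⟩
  have hcard : Fintype.card {i : Fin (n - k) // (P * (H * Eᵀ)) i ≠ 0} = t := by
    rw [← finrank_span_eq_card hliPS, ← hspanPS]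
    exact (Matrix.rank_eq_finrank_span_row _).symm.trans hrkPS
  -- rank of P * (H * G) is t + 1 but is supported on ≤ t rows
  have hM2 : (P * (H * G)).rank = t + 1 := by
    rw [Matrix.rank_mul_eq_right_of_isUnit_det P (H * G) hPdet]
    exact hrkG
  have hM2rows : ∀ i : Fin (n - k), (P * (H * Eᵀ)) i = 0 → (P * (H * G)) i = 0 := by
    intro i hi
    funext sx
    have e : (P * (H * G)) i sx = ∑ j, (P * H) i j * G j sx := by
      rw [← Matrix.mul_assoc, Matrix.mul_apply]
    rw [e]
    cases sx with
    | inl r =>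
        have := (hZiff i).mp hi r
        simpa [dotProduct, hBLdef, hGdef, Matrix.map_apply] using this
    | inr u =>
        have := hbdot i hi
        simpa [hGdef] using this
  set M3 : Matrix {i : Fin (n - k) // (P * (H * Eᵀ)) i ≠ 0} (Fin t ⊕ Unit) L :=
    Matrix.of fun i sx => (P * (H * G)) i.1 sx with hM3def
  have hspan3 : Submodule.span L (Set.range (P * (H * G))) =
      Submodule.span L (Set.range M3) := by
    apply le_antisymm
    · rw [Submodule.span_le]
      rintro x ⟨i, rfl⟩
      by_cases h0 : (P * (H * Eᵀ)) i = 0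
      · rw [SetLike.mem_coe, hM2rows i h0]
        exact Submodule.zero_mem _
      · exact Submodule.subset_span ⟨⟨i, h0⟩, rfl⟩
    · rw [Submodule.span_le]
      rintro x ⟨i, rfl⟩
      exact Submodule.subset_span ⟨i.1, rfl⟩
  have hfinal : (P * (H * G)).rank ≤ t := by
    rw [Matrix.rank_eq_finrank_span_row, Matrix.row, hspan3,
      show Set.range M3 = Set.range M3.row from rfl, ← Matrix.rank_eq_finrank_span_row]
    calc M3.rank ≤ Fintype.card {i : Fin (n - k) // (P * (H * Eᵀ)) i ≠ 0} :=
          Matrix.rank_le_card_height M3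
      _ = t := hcard
  omega
end
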